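/- arXiv:2402.06244 — 6 statements merged into one kernel-verified Lean document; each statement's English description precedes it below -/
import Mathlib

section
/- Let ζ¹, ζ² : ℝ^{d₁} → ℝ and ℝ^{d₂} → ℝ be functions that are Lipschitz with constants τ¹ > 0 and τ² > 0 respectively (with respect to the ℓ₂ norm). Let c¹, c² > 0 and β ∈ ℝ, and suppose x = (x¹, x²) satisfies c¹·ζ¹(x¹) + c²·ζ²(x²) + β > 0. Then for every x' = (x'¹, x'²) satisfying c¹·ζ¹(x'¹) + c²·ζ²(x'²) + β = 0, we have ‖x − x'‖₂ ≥ (c¹·ζ¹(x¹) + c²·ζ²(x²) + β) / √((c¹τ¹)² + (c²τ²)²). -/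
theorem stmt_0 {d₁ d₂ : ℕ}
    (ζ₁ : EuclideanSpace ℝ (Fin d₁) → ℝ) (ζ₂ : EuclideanSpace ℝ (Fin d₂) → ℝ)
    (τ₁ τ₂ : ℝ) (hτ₁ : 0 < τ₁) (hτ₂ : 0 < τ₂)
    (hL₁ : ∀ u v, |ζ₁ u - ζ₁ v| ≤ τ₁ * ‖u - v‖)
    (hL₂ : ∀ u v, |ζ₂ u - ζ₂ v| ≤ τ₂ * ‖u - v‖)
    (c₁ c₂ β : ℝ) (hc₁ : 0 < c₁) (hc₂ : 0 < c₂)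
    (x₁ : EuclideanSpace ℝ (Fin d₁)) (x₂ : EuclideanSpace ℝ (Fin d₂))
    (hx : 0 < c₁ * ζ₁ x₁ + c₂ * ζ₂ x₂ + β) :
    ∀ (x₁' : EuclideanSpace ℝ (Fin d₁)) (x₂' : EuclideanSpace ℝ (Fin d₂)),
      c₁ * ζ₁ x₁' + c₂ * ζ₂ x₂' + β = 0 →
      Real.sqrt (‖x₁ - x₁'‖ ^ 2 + ‖x₂ - x₂'‖ ^ 2) ≥
        (c₁ * ζ₁ x₁ + c₂ * ζ₂ x₂ + β) / Real.sqrt ((c₁ * τ₁) ^ 2 + (c₂ * τ₂) ^ 2) := by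
  intro x₁' x₂' h0
  set a := ‖x₁ - x₁'‖ with ha
  set b := ‖x₂ - x₂'‖ with hb
  have ha0 : 0 ≤ a := norm_nonneg _
  have hb0 : 0 ≤ b := norm_nonneg _
  set M := c₁ * ζ₁ x₁ + c₂ * ζ₂ x₂ + β with hM
  have h1 : ζ₁ x₁ - ζ₁ x₁' ≤ τ₁ * a := le_trans (le_abs_self _) (hL₁ x₁ x₁')
  have h2 : ζ₂ x₂ - ζ₂ x₂' ≤ τ₂ * b := le_trans (le_abs_self _) (hL₂ x₂ x₂')
  have hMle : M ≤ c₁ * τ₁ * a + c₂ * τ₂ * b := by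
    have : M = c₁ * (ζ₁ x₁ - ζ₁ x₁') + c₂ * (ζ₂ x₂ - ζ₂ x₂') := by
      rw [hM]; linarith
    rw [this]
    nlinarith [mul_le_mul_of_nonneg_left h1 hc₁.le, mul_le_mul_of_nonneg_left h2 hc₂.le]
  have hden : 0 < Real.sqrt ((c₁ * τ₁) ^ 2 + (c₂ * τ₂) ^ 2) := by
    apply Real.sqrt_pos.2; positivity
  rw [ge_iff_le, div_le_iff₀ hden]
  have hsq1 : Real.sqrt (a ^ 2 + b ^ 2) ^ 2 = a ^ 2 + b ^ 2 := Real.sq_sqrt (by positivity)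
  have hsq2 : Real.sqrt ((c₁ * τ₁) ^ 2 + (c₂ * τ₂) ^ 2) ^ 2 = (c₁ * τ₁) ^ 2 + (c₂ * τ₂) ^ 2 :=
    Real.sq_sqrt (by positivity)
  have hcs : c₁ * τ₁ * a + c₂ * τ₂ * b ≤
      Real.sqrt (a ^ 2 + b ^ 2) * Real.sqrt ((c₁ * τ₁) ^ 2 + (c₂ * τ₂) ^ 2) := by
    have hnn : 0 ≤ Real.sqrt (a ^ 2 + b ^ 2) * Real.sqrt ((c₁ * τ₁) ^ 2 + (c₂ * τ₂) ^ 2) := by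
      positivity
    nlinarith [sq_nonneg (c₁ * τ₁ * b - c₂ * τ₂ * a), Real.sqrt_nonneg (a ^ 2 + b ^ 2),
      Real.sqrt_nonneg ((c₁ * τ₁) ^ 2 + (c₂ * τ₂) ^ 2)]
  linarith
end

section
/- Let ζ¹ : ℝ^{d₁} → ℝ and ζ² : ℝ^{d₂} → ℝ be Lipschitz with constants τ¹, τ² > 0, let c¹, c² > 0 and β ∈ ℝ, and suppose c¹·ζ¹(x¹) + c²·ζ²(x²) + β > 0 for a point x = (x¹, x²). Then for every perturbation x'¹ of the first modality only, satisfying c¹·ζ¹(x'¹) + c²·ζ²(x²) + β = 0, one has ‖x¹ − x'¹‖₂ ≥ (c¹·ζ¹(x¹) + c²·ζ²(x²) + β) / (c¹·τ¹). -/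
theorem stmt_1 {d₁ d₂ : ℕ}
    (ζ₁ : EuclideanSpace ℝ (Fin d₁) → ℝ) (ζ₂ : EuclideanSpace ℝ (Fin d₂) → ℝ)
    (τ₁ τ₂ : ℝ) (hτ₁ : 0 < τ₁) (hτ₂ : 0 < τ₂)
    (hL₁ : ∀ u v, |ζ₁ u - ζ₁ v| ≤ τ₁ * ‖u - v‖)
    (hL₂ : ∀ u v, |ζ₂ u - ζ₂ v| ≤ τ₂ * ‖u - v‖)
    (c₁ c₂ β : ℝ) (hc₁ : 0 < c₁) (hc₂ : 0 < c₂)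
    (x₁ : EuclideanSpace ℝ (Fin d₁)) (x₂ : EuclideanSpace ℝ (Fin d₂))
    (hx : 0 < c₁ * ζ₁ x₁ + c₂ * ζ₂ x₂ + β) :
    ∀ x₁' : EuclideanSpace ℝ (Fin d₁),
      c₁ * ζ₁ x₁' + c₂ * ζ₂ x₂ + β = 0 →
      ‖x₁ - x₁'‖ ≥ (c₁ * ζ₁ x₁ + c₂ * ζ₂ x₂ + β) / (c₁ * τ₁) := by
  intro x₁' h0
  have key : c₁ * ζ₁ x₁ + c₂ * ζ₂ x₂ + β = c₁ * (ζ₁ x₁ - ζ₁ x₁') := by linarith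
  have h1 : ζ₁ x₁ - ζ₁ x₁' ≤ τ₁ * ‖x₁ - x₁'‖ := (abs_le.mp (hL₁ x₁ x₁')).2
  rw [ge_iff_le, div_le_iff₀ (by positivity), key]
  nlinarith [norm_nonneg (x₁ - x₁')]
end

section
/- Let ζ¹, ζ² be Lipschitz with constants τ¹, τ² > 0, and c¹, c² > 0, β ∈ ℝ. Suppose x = (x¹, x²) satisfies c¹ζ¹(x¹) + c²ζ²(x²) + β > 0 and ζ² is continuous. Let x' = (x'¹, x'²) be a minimizer of ‖x − x'‖₂ subject to c¹ζ¹(x'¹) + c²ζ²(x'²) + β = 0 (assume a minimizer exists). Then ζ¹(x'¹) ≤ ζ¹(x¹) and ζ²(x'²) ≤ ζ²(x²). -/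
lemma stmt_4_aux {E F : Type*} [NormedAddCommGroup E] [NormedAddCommGroup F]
    [NormedSpace ℝ E] [NormedSpace ℝ F]
    (ζ₁ : E → ℝ) (ζ₂ : F → ℝ) (c₁ c₂ β : ℝ) (hc₁ : 0 < c₁)
    (x₁ x₁' : E) (x₂ x₂' : F)
    (hx : 0 < c₁ * ζ₁ x₁ + c₂ * ζ₂ x₂ + β)
    (hcont₂ : Continuous ζ₂)
    (hfeas : c₁ * ζ₁ x₁' + c₂ * ζ₂ x₂' + β = 0)
    (hmin : ∀ y₂ : F, c₁ * ζ₁ x₁ + c₂ * ζ₂ y₂ + β = 0 →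
      Real.sqrt (‖x₁ - x₁'‖ ^ 2 + ‖x₂ - x₂'‖ ^ 2) ≤ Real.sqrt (0 + ‖x₂ - y₂‖ ^ 2)) :
    ζ₁ x₁' ≤ ζ₁ x₁ := by
  by_contra h
  push_neg at h
  have hne : x₁ - x₁' ≠ 0 := by
    intro e
    have : x₁ = x₁' := by
      have := sub_eq_zero.mp e; exact this
    rw [this] at h; exact lt_irrefl _ h
  have hn : 0 < ‖x₁ - x₁'‖ := norm_pos_iff.mpr hne
  have hA : 0 < ‖x₁ - x₁'‖ ^ 2 := by positivity
  set f : ℝ → ℝ := fun t => c₁ * ζ₁ x₁ + c₂ * ζ₂ (x₂' + t • (x₂ - x₂')) + β with hf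
  have hfc : Continuous f := by
    apply Continuous.add
    · exact continuous_const.add (continuous_const.mul (hcont₂.comp (by continuity)))
    · exact continuous_const
  have hf0 : f 0 < 0 := by
    have : f 0 = c₁ * ζ₁ x₁ + c₂ * ζ₂ x₂' + β := by simp [hf]
    rw [this]
    have : c₁ * ζ₁ x₁ < c₁ * ζ₁ x₁' := by
      exact (mul_lt_mul_iff_right₀ hc₁).mpr h
    linarith [hfeas]
  have hf1 : 0 < f 1 := by
    have : f 1 = c₁ * ζ₁ x₁ + c₂ * ζ₂ x₂ + β := by simp [hf]
    rw [this]; exact hx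
  have hsub : (0 : ℝ) ∈ Set.Icc (f 0) (f 1) := ⟨le_of_lt hf0, le_of_lt hf1⟩
  obtain ⟨t, ht, hft⟩ := intermediate_value_Icc (by norm_num : (0:ℝ) ≤ 1) hfc.continuousOn hsub
  set y₂ := x₂' + t • (x₂ - x₂') with hy₂
  have hfeas' : c₁ * ζ₁ x₁ + c₂ * ζ₂ y₂ + β = 0 := hft
  have hnorm : ‖x₂ - y₂‖ ≤ ‖x₂ - x₂'‖ := by
    have : x₂ - y₂ = (1 - t) • (x₂ - x₂') := by
      rw [hy₂]; module
    rw [this, norm_smul, Real.norm_eq_abs, abs_of_nonneg (by linarith [ht.2])]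
    nlinarith [ht.1, ht.2, norm_nonneg (x₂ - x₂')]
  have hle := hmin y₂ hfeas'
  have h1 : Real.sqrt (0 + ‖x₂ - y₂‖ ^ 2) ≤ Real.sqrt (‖x₂ - x₂'‖ ^ 2) := by
    apply Real.sqrt_le_sqrt
    have := pow_le_pow_left₀ (norm_nonneg _) hnorm 2
    linarith
  have h2 : Real.sqrt (‖x₂ - x₂'‖ ^ 2) < Real.sqrt (‖x₁ - x₁'‖ ^ 2 + ‖x₂ - x₂'‖ ^ 2) := by
    apply Real.sqrt_lt_sqrt (by positivity)
    linarith
  linarith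

theorem stmt_4 {d₁ d₂ : ℕ}
    (ζ₁ : EuclideanSpace ℝ (Fin d₁) → ℝ) (ζ₂ : EuclideanSpace ℝ (Fin d₂) → ℝ)
    (τ₁ τ₂ : ℝ) (hτ₁ : 0 < τ₁) (hτ₂ : 0 < τ₂)
    (hL₁ : ∀ u v, |ζ₁ u - ζ₁ v| ≤ τ₁ * ‖u - v‖)
    (hL₂ : ∀ u v, |ζ₂ u - ζ₂ v| ≤ τ₂ * ‖u - v‖)
    (c₁ c₂ β : ℝ) (hc₁ : 0 < c₁) (hc₂ : 0 < c₂)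
    (x₁ : EuclideanSpace ℝ (Fin d₁)) (x₂ : EuclideanSpace ℝ (Fin d₂))
    (hx : 0 < c₁ * ζ₁ x₁ + c₂ * ζ₂ x₂ + β)
    (hcont : Continuous ζ₂)
    (x₁' : EuclideanSpace ℝ (Fin d₁)) (x₂' : EuclideanSpace ℝ (Fin d₂))
    (hfeas : c₁ * ζ₁ x₁' + c₂ * ζ₂ x₂' + β = 0)
    (hmin : ∀ (y₁ : EuclideanSpace ℝ (Fin d₁)) (y₂ : EuclideanSpace ℝ (Fin d₂)),
      c₁ * ζ₁ y₁ + c₂ * ζ₂ y₂ + β = 0 →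
      Real.sqrt (‖x₁ - x₁'‖ ^ 2 + ‖x₂ - x₂'‖ ^ 2) ≤
        Real.sqrt (‖x₁ - y₁‖ ^ 2 + ‖x₂ - y₂‖ ^ 2)) :
    ζ₁ x₁' ≤ ζ₁ x₁ ∧ ζ₂ x₂' ≤ ζ₂ x₂ := by
  have hcont₁ : Continuous ζ₁ := by
    have : LipschitzWith (Real.toNNReal τ₁) ζ₁ := by
      apply LipschitzWith.of_dist_le_mul
      intro u v
      rw [Real.dist_eq, dist_eq_norm, Real.coe_toNNReal _ (le_of_lt hτ₁)]
      exact hL₁ u v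
    exact this.continuous
  constructor
  · apply stmt_4_aux ζ₁ ζ₂ c₁ c₂ β hc₁ x₁ x₁' x₂ x₂' hx hcont hfeas
    intro y₂ hy
    have := hmin x₁ y₂ hy
    simpa using this
  · apply stmt_4_aux ζ₂ ζ₁ c₂ c₁ β hc₂ x₂ x₂' x₁ x₁'
      (by linarith) hcont₁ (by linarith)
    intro y₁ hy
    have := hmin y₁ x₂ (by linarith)
    rw [add_comm (‖x₁ - x₁'‖ ^ 2)] at this
    simpa [add_comm] using this
end

section
/- Let γ¹ : ℝ^{d₁} → ℝ and γ² : ℝ^{d₂} → ℝ be Lipschitz with constants L¹, L² > 0 respectively, and let β̃ ∈ ℝ. Suppose x = (x¹, x²) satisfies γ¹(x¹) + γ²(x²) + β̃ > 0. Then every x' = (x'¹, x'²) with γ¹(x'¹) + γ²(x'²) + β̃ = 0 satisfies ‖x − x'‖₂ ≥ (γ¹(x¹) + γ²(x²) + β̃) / √((L¹)² + (L²)²). -/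
theorem stmt_7 {d₁ d₂ : ℕ}
    (γ₁ : EuclideanSpace ℝ (Fin d₁) → ℝ) (γ₂ : EuclideanSpace ℝ (Fin d₂) → ℝ)
    (L₁ L₂ : ℝ) (hL₁pos : 0 < L₁) (hL₂pos : 0 < L₂)
    (hLip₁ : ∀ u v, |γ₁ u - γ₁ v| ≤ L₁ * ‖u - v‖)
    (hLip₂ : ∀ u v, |γ₂ u - γ₂ v| ≤ L₂ * ‖u - v‖)
    (βt : ℝ)
    (x₁ : EuclideanSpace ℝ (Fin d₁)) (x₂ : EuclideanSpace ℝ (Fin d₂))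
    (hx : 0 < γ₁ x₁ + γ₂ x₂ + βt) :
    ∀ (x₁' : EuclideanSpace ℝ (Fin d₁)) (x₂' : EuclideanSpace ℝ (Fin d₂)),
      γ₁ x₁' + γ₂ x₂' + βt = 0 →
      Real.sqrt (‖x₁ - x₁'‖ ^ 2 + ‖x₂ - x₂'‖ ^ 2) ≥
        (γ₁ x₁ + γ₂ x₂ + βt) / Real.sqrt (L₁ ^ 2 + L₂ ^ 2) := by
  intro x₁' x₂' h0
  set a := ‖x₁ - x₁'‖ with ha
  set b := ‖x₂ - x₂'‖ with hb
  have ha0 : 0 ≤ a := norm_nonneg _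
  have hb0 : 0 ≤ b := norm_nonneg _
  have h1 : γ₁ x₁ - γ₁ x₁' ≤ L₁ * a := (abs_le.mp (hLip₁ x₁ x₁')).2
  have h2 : γ₂ x₂ - γ₂ x₂' ≤ L₂ * b := (abs_le.mp (hLip₂ x₂ x₂')).2
  have hc : γ₁ x₁ + γ₂ x₂ + βt ≤ L₁ * a + L₂ * b := by linarith
  set S := Real.sqrt (a ^ 2 + b ^ 2) with hS
  set T := Real.sqrt (L₁ ^ 2 + L₂ ^ 2) with hT
  have hS0 : 0 ≤ S := Real.sqrt_nonneg _
  have hT0 : 0 < T := Real.sqrt_pos.mpr (by positivity)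
  have hSsq : S ^ 2 = a ^ 2 + b ^ 2 := Real.sq_sqrt (by positivity)
  have hTsq : T ^ 2 = L₁ ^ 2 + L₂ ^ 2 := Real.sq_sqrt (by positivity)
  have hCS : L₁ * a + L₂ * b ≤ T * S := by
    nlinarith [sq_nonneg (L₁ * b - L₂ * a), sq_nonneg (T * S - (L₁ * a + L₂ * b)),
      mul_nonneg hT0.le hS0]
  rw [ge_iff_le, div_le_iff₀ hT0]
  nlinarith
end

section
/- Let l ≥ 1, and for each m ∈ {1, …, l} let ζ^{(m)} : ℝ^{d_m} → ℝ be Lipschitz with constant τ^{(m)} > 0, and let c^{(m)} > 0, β ∈ ℝ. Suppose x = (x^{(1)}, …, x^{(l)}) satisfies Σ_m c^{(m)} ζ^{(m)}(x^{(m)}) + β > 0. Then every x' = (x'^{(1)}, …, x'^{(l)}) with Σ_m c^{(m)} ζ^{(m)}(x'^{(m)}) + β = 0 satisfies ‖x − x'‖₂ ≥ (Σ_m c^{(m)} ζ^{(m)}(x^{(m)}) + β) / √(Σ_m (c^{(m)} τ^{(m)})²). -/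
theorem stmt_8 {l : ℕ} (hl : 1 ≤ l) (d : Fin l → ℕ)
    (ζ : ∀ m : Fin l, EuclideanSpace ℝ (Fin (d m)) → ℝ)
    (τ c : Fin l → ℝ) (hτ : ∀ m, 0 < τ m) (hc : ∀ m, 0 < c m) (β : ℝ)
    (hLip : ∀ m, ∀ u v, |ζ m u - ζ m v| ≤ τ m * ‖u - v‖)
    (x : ∀ m : Fin l, EuclideanSpace ℝ (Fin (d m)))
    (hx : 0 < ∑ m, c m * ζ m (x m) + β) :
    ∀ x' : ∀ m : Fin l, EuclideanSpace ℝ (Fin (d m)),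
      ∑ m, c m * ζ m (x' m) + β = 0 →
      Real.sqrt (∑ m, ‖x m - x' m‖ ^ 2) ≥
        (∑ m, c m * ζ m (x m) + β) / Real.sqrt (∑ m, (c m * τ m) ^ 2) := by
  intro x' hx'
  set S := ∑ m, c m * ζ m (x m) + β with hS
  set A := ∑ m, (c m * τ m) ^ 2 with hA
  set B := ∑ m, ‖x m - x' m‖ ^ 2 with hB
  have hAp : 0 < A := by
    refine Finset.sum_pos' (fun m _ => sq_nonneg _) ⟨⟨0, hl⟩, Finset.mem_univ _, ?_⟩
    exact pow_pos (mul_pos (hc _) (hτ _)) 2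
  have hsA : 0 < Real.sqrt A := Real.sqrt_pos.mpr hAp
  have hSeq : S = ∑ m, c m * (ζ m (x m) - ζ m (x' m)) := by
    simp only [mul_sub, Finset.sum_sub_distrib]
    have h1 : ∑ m, c m * ζ m (x' m) = -β := by linarith
    rw [h1, hS]; ring
  have h1 : S ≤ ∑ m, (c m * τ m) * ‖x m - x' m‖ := by
    rw [hSeq]
    apply Finset.sum_le_sum
    intro m _
    have h2 : ζ m (x m) - ζ m (x' m) ≤ τ m * ‖x m - x' m‖ :=
      (le_abs_self _).trans (hLip m (x m) (x' m))
    calc c m * (ζ m (x m) - ζ m (x' m)) ≤ c m * (τ m * ‖x m - x' m‖) :=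
          mul_le_mul_of_nonneg_left h2 (hc m).le
      _ = (c m * τ m) * ‖x m - x' m‖ := by ring
  have h3 : (∑ m, (c m * τ m) * ‖x m - x' m‖) ≤ Real.sqrt A * Real.sqrt B :=
    Real.sum_mul_le_sqrt_mul_sqrt _ _ _
  rw [ge_iff_le, div_le_iff₀ hsA]
  nlinarith [h1.trans h3]
end

section
/- Let ζ¹, ζ² : ℝ^{d₁} × ℝ^{d₂} → ℝ satisfy mixed Lipschitz bounds: |ζ^{(m)}(x¹, x²) − ζ^{(m)}(x'¹, x'²)| ≤ τ^{(m1)} ‖x¹ − x'¹‖₂ + τ^{(m2)} ‖x² − x'²‖₂ for m = 1, 2, with all τ^{(mn)} ≥ 0. Let c¹, c² > 0 and β ∈ ℝ, and suppose c¹ ζ¹(x¹, x²) + c² ζ²(x¹, x²) + β > 0. Then every (x'¹, x'²) with c¹ ζ¹(x'¹, x'²) + c² ζ²(x'¹, x'²) + β = 0 satisfies √(‖x¹−x'¹‖₂² + ‖x²−x'²‖₂²) ≥ (c¹ ζ¹(x¹,x²) + c² ζ²(x¹,x²) + β) / √((c¹τ^{(11)} + c²τ^{(21)})² + (c¹τ^{(12)}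 + c²τ^{(22)})²). -/
theorem stmt_9 {d₁ d₂ : ℕ}
    (ζ₁ ζ₂ : EuclideanSpace ℝ (Fin d₁) → EuclideanSpace ℝ (Fin d₂) → ℝ)
    (τ₁₁ τ₁₂ τ₂₁ τ₂₂ : ℝ)
    (hτ₁₁ : 0 ≤ τ₁₁) (hτ₁₂ : 0 ≤ τ₁₂) (hτ₂₁ : 0 ≤ τ₂₁) (hτ₂₂ : 0 ≤ τ₂₂)
    (hLip₁ : ∀ u₁ u₂ v₁ v₂, |ζ₁ u₁ u₂ - ζ₁ v₁ v₂| ≤ τ₁₁ * ‖u₁ - v₁‖ + τ₁₂ * ‖u₂ - v₂‖)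
    (hLip₂ : ∀ u₁ u₂ v₁ v₂, |ζ₂ u₁ u₂ - ζ₂ v₁ v₂| ≤ τ₂₁ * ‖u₁ - v₁‖ + τ₂₂ * ‖u₂ - v₂‖)
    (c₁ c₂ β : ℝ) (hc₁ : 0 < c₁) (hc₂ : 0 < c₂)
    (x₁ : EuclideanSpace ℝ (Fin d₁)) (x₂ : EuclideanSpace ℝ (Fin d₂))
    (hx : 0 < c₁ * ζ₁ x₁ x₂ + c₂ * ζ₂ x₁ x₂ + β) :
    ∀ (x₁' : EuclideanSpace ℝ (Fin d₁)) (x₂' : EuclideanSpace ℝ (Fin d₂)),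
      c₁ * ζ₁ x₁' x₂' + c₂ * ζ₂ x₁' x₂' + β = 0 →
      Real.sqrt (‖x₁ - x₁'‖ ^ 2 + ‖x₂ - x₂'‖ ^ 2) ≥
        (c₁ * ζ₁ x₁ x₂ + c₂ * ζ₂ x₁ x₂ + β) /
          Real.sqrt ((c₁ * τ₁₁ + c₂ * τ₂₁) ^ 2 + (c₁ * τ₁₂ + c₂ * τ₂₂) ^ 2) := by
  intro x₁' x₂' h0
  set M := c₁ * ζ₁ x₁ x₂ + c₂ * ζ₂ x₁ x₂ + β with hM
  set a := ‖x₁ - x₁'‖ with ha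
  set b := ‖x₂ - x₂'‖ with hb
  set A := c₁ * τ₁₁ + c₂ * τ₂₁ with hA
  set B := c₁ * τ₁₂ + c₂ * τ₂₂ with hB
  have ha0 : 0 ≤ a := norm_nonneg _
  have hb0 : 0 ≤ b := norm_nonneg _
  have hA0 : 0 ≤ A := by positivity
  have hB0 : 0 ≤ B := by positivity
  have h1 := hLip₁ x₁ x₂ x₁' x₂'
  have h2 := hLip₂ x₁ x₂ x₁' x₂'
  have habs1 : ζ₁ x₁ x₂ - ζ₁ x₁' x₂' ≤ τ₁₁ * a + τ₁₂ * b :=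
    le_trans (le_abs_self _) h1
  have habs2 : ζ₂ x₁ x₂ - ζ₂ x₁' x₂' ≤ τ₂₁ * a + τ₂₂ * b :=
    le_trans (le_abs_self _) h2
  have hMle : M ≤ A * a + B * b := by
    have : M = c₁ * (ζ₁ x₁ x₂ - ζ₁ x₁' x₂') + c₂ * (ζ₂ x₁ x₂ - ζ₂ x₁' x₂') := by
      rw [hM]; linarith [h0]
    rw [this, hA, hB]
    nlinarith [mul_le_mul_of_nonneg_left habs1 hc₁.le,
      mul_le_mul_of_nonneg_left habs2 hc₂.le]
  -- Cauchy–Schwarz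
  have hCS : A * a + B * b ≤ Real.sqrt (A ^ 2 + B ^ 2) * Real.sqrt (a ^ 2 + b ^ 2) := by
    rw [← Real.sqrt_mul (by positivity)]
    rw [Real.le_sqrt (by positivity) (by positivity)]
    nlinarith [sq_nonneg (A * b - B * a)]
  have hMle2 : M ≤ Real.sqrt (A ^ 2 + B ^ 2) * Real.sqrt (a ^ 2 + b ^ 2) :=
    le_trans hMle hCS
  have hden : 0 < Real.sqrt (A ^ 2 + B ^ 2) := by
    rcases lt_or_eq_of_le (Real.sqrt_nonneg (A ^ 2 + B ^ 2)) with h | h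
    · exact h
    · exfalso; rw [← h, zero_mul] at hMle2; linarith
  rw [ge_iff_le, div_le_iff₀ hden, mul_comm]
  exact hMle2
end
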